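/- For A, B positive semidefinite symmetric m×m real matrices, the Frobenius norm of A^{1/2} − B^{1/2} satisfies |A^{1/2} − B^{1/2}|_F² ≤ |A − B|_*, where |·|_* denotes the nuclear (trace) norm. (Powers–Størmer inequality.) -/

import Mathlib

open Matrix

noncomputable def frob {m : ℕ} (M : Matrix (Fin m) (Fin m) ℝ) : ℝ :=
  Real.sqrt (∑ i, ∑ j, (M i j) ^ 2)

/-- Nuclear norm of a Hermitian (real symmetric) matrix: sum of absolute
values of its eigenvalues. -/
noncomputable def nuclear {m : ℕ} (M : Matrix (Fin m) (Fin m) ℝ)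
    (hM : M.IsHermitian) : ℝ :=
  ∑ i, |hM.eigenvalues i|

open scoped ComplexOrder in
noncomputable def Matrix.PosSemidef.sqrt {n : Type*} [Fintype n] [DecidableEq n] {𝕜 : Type*}
    [RCLike 𝕜] {A : Matrix n n 𝕜} (hA : A.PosSemidef) : Matrix n n 𝕜 :=
  hA.1.eigenvectorUnitary.1 * diagonal ((↑) ∘ Real.sqrt ∘ hA.1.eigenvalues) *
    (star hA.1.eigenvectorUnitary : Matrix n n 𝕜)

lemma Matrix.PosSemidef.posSemidef_sqrt {m : ℕ} {A : Matrix (Fin m) (Fin m) ℝ}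
    (hA : A.PosSemidef) : hA.sqrt.PosSemidef := by
  unfold Matrix.PosSemidef.sqrt
  apply PosSemidef.mul_mul_conjTranspose_same
  apply PosSemidef.diagonal
  intro i
  simp [Real.sqrt_nonneg]

lemma Matrix.PosSemidef.sqrt_mul_self {m : ℕ} {A : Matrix (Fin m) (Fin m) ℝ}
    (hA : A.PosSemidef) : hA.sqrt * hA.sqrt = A := by
  have hU : star (hA.1.eigenvectorUnitary : Matrix (Fin m) (Fin m) ℝ) * hA.1.eigenvectorUnitary = 1 :=
    Matrix.mem_unitaryGroup_iff'.mp hA.1.eigenvectorUnitary.2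
  conv_rhs => rw [hA.1.spectral_theorem]
  rw [Unitary.conjStarAlgAut_apply]
  unfold Matrix.PosSemidef.sqrt
  set U : Matrix (Fin m) (Fin m) ℝ := hA.1.eigenvectorUnitary.1
  set d : Matrix (Fin m) (Fin m) ℝ := diagonal ((↑) ∘ Real.sqrt ∘ hA.1.eigenvalues)
  calc U * d * star U * (U * d * star U) = U * d * (star U * U) * d * star U := by
        simp only [mul_assoc]
    _ = U * (d * d) * star U := by rw [hU]; simp only [mul_one, mul_assoc]
    _ = _ := by
        congr 2
        simp only [d, diagonal_mul_diagonal]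
        congr 1; funext i
        simp [Real.mul_self_sqrt (hA.eigenvalues_nonneg i)]

/-- Entrywise spectral expansion of a real symmetric matrix. -/
lemma ps_entry_expand {m : ℕ} {M : Matrix (Fin m) (Fin m) ℝ} (hM : M.IsHermitian) (k l : Fin m) :
    M k l = ∑ j, hM.eigenvalues j * (hM.eigenvectorBasis j k * hM.eigenvectorBasis j l) := by
  conv_lhs => rw [hM.spectral_theorem]
  simp [Matrix.mul_apply, Matrix.diagonal_apply, Matrix.star_apply, Finset.sum_mul,
    mul_comm, mul_assoc, mul_left_comm]

/-- Quadratic form expansion via eigen-decomposition. -/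
lemma ps_quad_expand {m : ℕ} {M : Matrix (Fin m) (Fin m) ℝ} (hM : M.IsHermitian)
    (x : Fin m → ℝ) :
    x ⬝ᵥ (M *ᵥ x) = ∑ j, hM.eigenvalues j * (∑ k, hM.eigenvectorBasis j k * x k) ^ 2 := by
  classical
  calc x ⬝ᵥ (M *ᵥ x)
      = ∑ k, ∑ l, x k * M k l * x l := by
        simp only [dotProduct, mulVec, dotProduct, Finset.mul_sum]
        exact Finset.sum_congr rfl fun k _ => Finset.sum_congr rfl fun l _ => by ring
    _ = ∑ k, ∑ l, ∑ j, hM.eigenvalues j * (hM.eigenvectorBasis j k * x k)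
          * (hM.eigenvectorBasis j l * x l) := by
        refine Finset.sum_congr rfl fun k _ => Finset.sum_congr rfl fun l _ => ?_
        rw [ps_entry_expand hM k l, Finset.mul_sum, Finset.sum_mul]
        exact Finset.sum_congr rfl fun j _ => by ring
    _ = ∑ k, ∑ j, ∑ l, hM.eigenvalues j * (hM.eigenvectorBasis j k * x k)
          * (hM.eigenvectorBasis j l * x l) :=
        Finset.sum_congr rfl fun k _ => Finset.sum_comm
    _ = ∑ j, ∑ k, ∑ l, hM.eigenvalues j * (hM.eigenvectorBasis j k * x k)
          * (hM.eigenvectorBasis j l * x l) := Finset.sum_comm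
    _ = ∑ j, hM.eigenvalues j * (∑ k, hM.eigenvectorBasis j k * x k) ^ 2 := by
        refine Finset.sum_congr rfl fun j _ => ?_
        rw [sq, Finset.sum_mul_sum, Finset.mul_sum]
        refine Finset.sum_congr rfl fun k _ => ?_
        rw [Finset.mul_sum]
        exact Finset.sum_congr rfl fun l _ => by ring

/-- Symmetric matrices can be moved across the dot product. -/
lemma ps_dot_sym {m : ℕ} {D : Matrix (Fin m) (Fin m) ℝ} (hD : D.IsHermitian) (x y : Fin m → ℝ) :
    x ⬝ᵥ (D *ᵥ y) = (D *ᵥ x) ⬝ᵥ y := by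
  simp only [dotProduct, mulVec, dotProduct, Finset.mul_sum, Finset.sum_mul]
  rw [Finset.sum_comm]
  refine Finset.sum_congr rfl fun l _ => Finset.sum_congr rfl fun k _ => ?_
  have h : D l k = D k l := by
    have := congrFun (congrFun hD l) k
    simpa using this.symm
  rw [h]; ring

lemma ps_parseval {m : ℕ} (v : OrthonormalBasis (Fin m) ℝ (EuclideanSpace ℝ (Fin m)))
    (w : EuclideanSpace ℝ (Fin m)) (hw : ‖w‖ = 1) :
    ∑ i, (∑ k, w k * v i k) ^ 2 = 1 := by
  have h := v.sum_inner_mul_inner w w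
  simp only [PiLp.inner_apply, RCLike.inner_apply, conj_trivial] at h
  have hww : (∑ k, w k * w k) = 1 := by
    have h2 : (inner ℝ w w : ℝ) = ‖w‖ ^ 2 := real_inner_self_eq_norm_sq w
    simp only [PiLp.inner_apply, RCLike.inner_apply, conj_trivial] at h2
    rw [h2, hw]; norm_num
  rw [← hww, ← h]
  refine Finset.sum_congr rfl fun i _ => ?_
  have e1 : (∑ k, w k * (v i) k) = ∑ k, (v i) k * w k :=
    Finset.sum_congr rfl fun k _ => mul_comm _ _
  rw [sq, e1]

lemma ps_trace_sq {m : ℕ} {D : Matrix (Fin m) (Fin m) ℝ} (hD : D.IsHermitian) :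
    trace (D * D) = ∑ i, hD.eigenvalues i ^ 2 := by
  set U : Matrix (Fin m) (Fin m) ℝ := ↑hD.eigenvectorUnitary with hUdef
  have hU : star U * U = 1 := Matrix.mem_unitaryGroup_iff'.mp hD.eigenvectorUnitary.2
  set d : Matrix (Fin m) (Fin m) ℝ := diagonal (RCLike.ofReal ∘ hD.eigenvalues)
  have h2 : D * D = U * (d * d) * star U := by
    conv_lhs => rw [hD.spectral_theorem]
    calc (U * d * star U) * (U * d * star U) = U * d * (star U * U) * d * star U := by
          simp only [mul_assoc]
      _ = U * (d * d) * star U := by rw [hU]; simp only [mul_one, mul_assoc]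
  rw [h2, Matrix.trace_mul_cycle, hU, one_mul]
  simp [d, diagonal_mul_diagonal, trace_diagonal, sq]

/-- Powers–Størmer inequality. -/
theorem powers_stormer {m : ℕ} (A B : Matrix (Fin m) (Fin m) ℝ)
    (hA : A.PosSemidef) (hB : B.PosSemidef) (hAB : (A - B).IsHermitian) :
    frob (hA.sqrt - hB.sqrt) ^ 2 ≤ nuclear (A - B) hAB := by
  classical
  have hP := hA.posSemidef_sqrt
  have hQ := hB.posSemidef_sqrt
  set P := hA.sqrt with hPd
  set Q := hB.sqrt with hQd
  have hD : (P - Q).IsHermitian := hP.1.sub hQ.1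
  set D := P - Q with hDd
  set lam := hD.eigenvalues with hlamd
  -- Step A: Frobenius norm squared is the sum of squared eigenvalues of D
  have hfrob : frob D ^ 2 = ∑ i, lam i ^ 2 := by
    have h0 : (0:ℝ) ≤ ∑ k, ∑ l, (D k l)^2 := by positivity
    have h1 : frob D ^ 2 = ∑ k, ∑ l, (D k l)^2 := Real.sq_sqrt h0
    have h2 : (∑ k, ∑ l, (D k l)^2) = trace (D * D) := by
      simp only [Matrix.trace, Matrix.diag, Matrix.mul_apply]
      refine Finset.sum_congr rfl fun k _ => Finset.sum_congr rfl fun l _ => ?_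
      have h3 : D l k = D k l := by
        have := congrFun (congrFun hD l) k
        simpa using this.symm
      rw [sq, h3]
    rw [h1, h2, ps_trace_sq hD]
  -- Key algebraic identity
  have hPP : P * P = A := hA.sqrt_mul_self
  have hQQ : Q * Q = B := hB.sqrt_mul_self
  have hkey : D * (P + Q) + (P + Q) * D = (A - B) + (A - B) := by
    have e : (P - Q) * (P + Q) + (P + Q) * (P - Q) = P*P + P*P - (Q*Q + Q*Q) := by
      noncomm_ring
    rw [hDd, e, hPP, hQQ]
    abel
  -- Step B: per-eigenvector estimate
  have hmain : ∀ i : Fin m, lam i ^ 2 ≤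
      |(⇑(hD.eigenvectorBasis i)) ⬝ᵥ ((A - B) *ᵥ ⇑(hD.eigenvectorBasis i))| := by
    intro i
    set x : Fin m → ℝ := ⇑(hD.eigenvectorBasis i) with hx
    have hmv : D *ᵥ x = lam i • x := hD.mulVec_eigenvectorBasis i
    have hxx : x ⬝ᵥ x = 1 := by
      have h2 : (inner ℝ (hD.eigenvectorBasis i) (hD.eigenvectorBasis i) : ℝ) = 1 := by
        rw [real_inner_self_eq_norm_sq, hD.eigenvectorBasis.orthonormal.1 i]
        norm_num
      simp only [PiLp.inner_apply, RCLike.inner_apply, conj_trivial] at h2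
      simpa [dotProduct] using h2
    have hqP : 0 ≤ x ⬝ᵥ (P *ᵥ x) := by simpa using hP.dotProduct_mulVec_nonneg x
    have hqQ : 0 ≤ x ⬝ᵥ (Q *ᵥ x) := by simpa using hQ.dotProduct_mulVec_nonneg x
    set qS := x ⬝ᵥ ((P + Q) *ᵥ x) with hqSd
    have hqS_split : qS = x ⬝ᵥ (P *ᵥ x) + x ⬝ᵥ (Q *ᵥ x) := by
      rw [hqSd, add_mulVec, dotProduct_add]
    have hlam_eq : x ⬝ᵥ (D *ᵥ x) = lam i := by
      rw [hmv, dotProduct_smul, smul_eq_mul, hxx, mul_one]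
    have hD_split : x ⬝ᵥ (D *ᵥ x) = x ⬝ᵥ (P *ᵥ x) - x ⬝ᵥ (Q *ᵥ x) := by
      rw [hDd, sub_mulVec, dotProduct_sub]
    have habs : |lam i| ≤ qS := by
      rw [← hlam_eq, hD_split, hqS_split]
      rw [abs_le]
      constructor <;> linarith
    have hqS_nonneg : 0 ≤ qS := le_trans (abs_nonneg _) habs
    have hqC : x ⬝ᵥ ((A - B) *ᵥ x) = lam i * qS := by
      have h2 : x ⬝ᵥ ((D * (P+Q) + (P+Q) * D) *ᵥ x)
          = x ⬝ᵥ (((A-B) + (A-B)) *ᵥ x) := by rw [hkey]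
      rw [add_mulVec, dotProduct_add, add_mulVec, dotProduct_add,
        ← mulVec_mulVec, ← mulVec_mulVec,
        ps_dot_sym hD x ((P+Q) *ᵥ x), hmv, smul_dotProduct, smul_eq_mul,
        mulVec_smul, dotProduct_smul, smul_eq_mul] at h2
      rw [← hqSd] at h2
      linarith
    calc lam i ^ 2 = |lam i| * |lam i| := by rw [← sq_abs, sq]
      _ ≤ |lam i| * qS := mul_le_mul_of_nonneg_left habs (abs_nonneg _)
      _ = |lam i * qS| := by rw [abs_mul, abs_of_nonneg hqS_nonneg]
      _ = |x ⬝ᵥ ((A - B) *ᵥ x)| := by rw [hqC]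
  -- Step C: sum of absolute quadratic forms is at most the nuclear norm
  have hsum : ∑ i, |(⇑(hD.eigenvectorBasis i)) ⬝ᵥ ((A-B) *ᵥ ⇑(hD.eigenvectorBasis i))|
      ≤ ∑ j, |hAB.eigenvalues j| := by
    calc ∑ i, |(⇑(hD.eigenvectorBasis i)) ⬝ᵥ ((A-B) *ᵥ ⇑(hD.eigenvectorBasis i))|
        ≤ ∑ i, ∑ j, |hAB.eigenvalues j|
            * (∑ k, hAB.eigenvectorBasis j k * hD.eigenvectorBasis i k)^2 := by
          refine Finset.sum_le_sum fun i _ => ?_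
          rw [ps_quad_expand hAB]
          refine (Finset.abs_sum_le_sum_abs _ _).trans ?_
          refine le_of_eq (Finset.sum_congr rfl fun j _ => ?_)
          rw [abs_mul, abs_sq]
      _ = ∑ j, |hAB.eigenvalues j|
            * ∑ i, (∑ k, hAB.eigenvectorBasis j k * hD.eigenvectorBasis i k)^2 := by
          rw [Finset.sum_comm]
          exact Finset.sum_congr rfl fun j _ => (Finset.mul_sum _ _ _).symm
      _ = ∑ j, |hAB.eigenvalues j| := by
          refine Finset.sum_congr rfl fun j _ => ?_
          rw [ps_parseval hD.eigenvectorBasis (hAB.eigenvectorBasis j)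
            (hAB.eigenvectorBasis.orthonormal.1 j), mul_one]
  rw [nuclear, hfrob]
  exact le_trans (Finset.sum_le_sum fun i _ => hmain i) hsum
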